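/- Let 𝒳, 𝒴 be compact, μ, ν probability measures, c bounded measurable, ε > 0, and let ℱ be any class of continuous functions f : 𝒳 → ℝ that are uniformly bounded. Define OT_ℱ^ε(μ,ν) = sup_{f∈ℱ} ∫f dμ + ∫f^{c,ε} dν. Then OT_ℱ^ε(μ,ν) ≤ OT^ε(μ,ν), and if φ is an optimal semi-dual potential for OT^ε(μ,ν) then for any f ∈ ℱ: |OT^ε(μ,ν) - OT_ℱ^ε(μ,ν)| ≤ 2 sup_{x∈𝒳}|φ(x) - f(x)|. -/

import Mathlib

open MeasureTheory

/-- The semi-dual EOT objective `S(g) = ∫ g dμ + ∫ g^{c,ε} dν`. -/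
noncomputable def semiDualObj {d : ℕ}
    (μ ν : Measure (EuclideanSpace ℝ (Fin d)))
    (c : EuclideanSpace ℝ (Fin d) → EuclideanSpace ℝ (Fin d) → ℝ) (ε : ℝ)
    (g : EuclideanSpace ℝ (Fin d) → ℝ) : ℝ :=
  ∫ x, g x ∂μ + ∫ y, (-ε * Real.log (∫ x, Real.exp ((g x - c x y) / ε) ∂μ)) ∂ν

section AuxSemiDual
variable {d : ℕ}

local notation "E" => EuclideanSpace ℝ (Fin d)

lemma exp_integrable (μ : Measure E) [IsProbabilityMeasure μ]
    (c : E → E → ℝ) (hcm : Measurable fun p : E × E => c p.1 p.2)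
    (Mc : ℝ) (hcb : ∀ x y, |c x y| ≤ Mc) (ε : ℝ) (hε : 0 < ε)
    (g : E → ℝ) (hg : AEStronglyMeasurable g μ) (Mg : ℝ) (hgb : ∀ x, |g x| ≤ Mg) (y : E) :
    Integrable (fun x => Real.exp ((g x - c x y) / ε)) μ := by
  have hmeas : AEStronglyMeasurable (fun x => Real.exp ((g x - c x y) / ε)) μ := by
    have h0 := Real.continuous_exp.comp_aestronglyMeasurable
      (f := fun x => (g x - c x y) * ε⁻¹)
      ((hg.sub (hcm.comp measurable_prodMk_right).aestronglyMeasurable).mul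
        aestronglyMeasurable_const)
    simpa [div_eq_mul_inv] using h0
  refine (integrable_const (Real.exp ((Mg + Mc) / ε))).mono' hmeas ?_
  filter_upwards with x
  rw [Real.norm_eq_abs, abs_of_pos (Real.exp_pos _)]
  apply Real.exp_le_exp.2
  apply (div_le_div_iff_of_pos_right hε).2
  have h1 := abs_le.1 (hgb x)
  have h2 := abs_le.1 (hcb x y)
  linarith

lemma exp_int_bounds (μ : Measure E) [IsProbabilityMeasure μ]
    (c : E → E → ℝ) (hcm : Measurable fun p : E × E => c p.1 p.2)
    (Mc : ℝ) (hcb : ∀ x y, |c x y| ≤ Mc) (ε : ℝ) (hε : 0 < ε)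
    (g : E → ℝ) (hg : AEStronglyMeasurable g μ) (Mg : ℝ) (hgb : ∀ x, |g x| ≤ Mg) (y : E) :
    Real.exp (-(Mg + Mc) / ε) ≤ ∫ x, Real.exp ((g x - c x y) / ε) ∂μ
      ∧ ∫ x, Real.exp ((g x - c x y) / ε) ∂μ ≤ Real.exp ((Mg + Mc) / ε) := by
  have hint := exp_integrable μ c hcm Mc hcb ε hε g hg Mg hgb y
  constructor
  · have : ∫ _x, Real.exp (-(Mg + Mc) / ε) ∂μ ≤ ∫ x, Real.exp ((g x - c x y) / ε) ∂μ := by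
      apply integral_mono_ae (integrable_const _) hint
      filter_upwards with x
      apply Real.exp_le_exp.2
      apply (div_le_div_iff_of_pos_right hε).2
      have h1 := abs_le.1 (hgb x); have h2 := abs_le.1 (hcb x y); linarith
    simpa using this
  · have : ∫ x, Real.exp ((g x - c x y) / ε) ∂μ ≤ ∫ _x, Real.exp ((Mg + Mc) / ε) ∂μ := by
      apply integral_mono_ae hint (integrable_const _)
      filter_upwards with x
      apply Real.exp_le_exp.2
      apply (div_le_div_iff_of_pos_right hε).2
      have h1 := abs_le.1 (hgb x); have h2 := abs_le.1 (hcb x y); linarith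
    simpa using this

lemma log_integrable (μ ν : Measure E) [IsProbabilityMeasure μ] [IsProbabilityMeasure ν]
    (c : E → E → ℝ) (hcm : Measurable fun p : E × E => c p.1 p.2)
    (Mc : ℝ) (hcb : ∀ x y, |c x y| ≤ Mc) (ε : ℝ) (hε : 0 < ε)
    (g : E → ℝ) (hg : AEStronglyMeasurable g μ) (Mg : ℝ) (hgb : ∀ x, |g x| ≤ Mg) :
    Integrable (fun y => -ε * Real.log (∫ x, Real.exp ((g x - c x y) / ε) ∂μ)) ν := by
  set g₀ := hg.mk g with hg₀def
  have hg₀m : StronglyMeasurable g₀ := hg.stronglyMeasurable_mk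
  have hgg₀ : g =ᵐ[μ] g₀ := hg.ae_eq_mk
  have hIeq : ∀ y, (∫ x, Real.exp ((g x - c x y) / ε) ∂μ)
      = ∫ x, Real.exp ((g₀ x - c x y) / ε) ∂μ := fun y =>
    integral_congr_ae (by filter_upwards [hgg₀] with x hx; rw [hx])
  have hImeas : StronglyMeasurable (fun y => ∫ x, Real.exp ((g₀ x - c x y) / ε) ∂μ) := by
    apply StronglyMeasurable.integral_prod_right
      (f := fun (y : E) (x : E) => Real.exp ((g₀ x - c x y) / ε))
    apply Measurable.stronglyMeasurable
    exact Real.measurable_exp.comp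
      (((hg₀m.measurable.comp measurable_snd).sub (hcm.comp measurable_swap)).div_const ε)
  have hmeas : AEStronglyMeasurable
      (fun y => -ε * Real.log (∫ x, Real.exp ((g x - c x y) / ε) ∂μ)) ν := by
    have : StronglyMeasurable
        (fun y => -ε * Real.log (∫ x, Real.exp ((g₀ x - c x y) / ε) ∂μ)) :=
      ((Real.measurable_log.comp hImeas.measurable).const_mul (-ε)).stronglyMeasurable
    apply this.aestronglyMeasurable.congr
    filter_upwards with y
    rw [hIeq y]
  refine (integrable_const (ε * ((Mg + Mc) / ε))).mono' hmeas ?_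
  filter_upwards with y
  obtain ⟨hlb, hub⟩ := exp_int_bounds μ c hcm Mc hcb ε hε g hg Mg hgb y
  have hpos : (0:ℝ) < ∫ x, Real.exp ((g x - c x y) / ε) ∂μ :=
    lt_of_lt_of_le (Real.exp_pos _) hlb
  have hlog1 : Real.log (∫ x, Real.exp ((g x - c x y) / ε) ∂μ) ≤ (Mg + Mc) / ε := by
    rw [← Real.log_exp ((Mg + Mc) / ε)]
    exact Real.log_le_log hpos hub
  have hlog2 : -(Mg + Mc) / ε ≤ Real.log (∫ x, Real.exp ((g x - c x y) / ε) ∂μ) := by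
    rw [← Real.log_exp (-(Mg + Mc) / ε)]
    exact Real.log_le_log (Real.exp_pos _) hlb
  rw [Real.norm_eq_abs, neg_mul, abs_neg, abs_mul, abs_of_pos hε]
  apply mul_le_mul_of_nonneg_left _ hε.le
  rw [abs_le]
  constructor
  · rw [neg_div] at hlog2; linarith
  · exact hlog1

lemma semiDual_comp (μ ν : Measure E) [IsProbabilityMeasure μ] [IsProbabilityMeasure ν]
    (c : E → E → ℝ) (hcm : Measurable fun p : E × E => c p.1 p.2)
    (Mc : ℝ) (hcb : ∀ x y, |c x y| ≤ Mc) (ε : ℝ) (hε : 0 < ε)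
    (g h : E → ℝ) (hgint : Integrable g μ) (hhint : Integrable h μ)
    (Mg Mh : ℝ) (hgb : ∀ x, |g x| ≤ Mg) (hhb : ∀ x, |h x| ≤ Mh)
    (t : ℝ) (ht : 0 ≤ t) (hgh : ∀ᵐ x ∂μ, |g x - h x| ≤ t) :
    semiDualObj μ ν c ε g ≤ semiDualObj μ ν c ε h + 2 * t := by
  have hgexp := exp_integrable μ c hcm Mc hcb ε hε g hgint.1 Mg hgb
  have hhexp := exp_integrable μ c hcm Mc hcb ε hε h hhint.1 Mh hhb
  -- first part
  have part1 : ∫ x, g x ∂μ ≤ ∫ x, h x ∂μ + t := by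
    have : ∫ x, g x ∂μ ≤ ∫ x, (h x + t) ∂μ := by
      apply integral_mono_ae hgint (hhint.add (integrable_const t))
      filter_upwards [hgh] with x hx
      have := abs_le.1 hx
      simp only [Pi.add_apply]; linarith
    rwa [integral_add hhint (integrable_const t), integral_const, probReal_univ,
      one_smul] at this
  -- second part: pointwise
  have part2pt : ∀ y, -ε * Real.log (∫ x, Real.exp ((g x - c x y) / ε) ∂μ)
      ≤ -ε * Real.log (∫ x, Real.exp ((h x - c x y) / ε) ∂μ) + t := by
    intro y
    have hIh_pos : (0:ℝ) < ∫ x, Real.exp ((h x - c x y) / ε) ∂μ :=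
      lt_of_lt_of_le (Real.exp_pos _) (exp_int_bounds μ c hcm Mc hcb ε hε h hhint.1 Mh hhb y).1
    have hIg_pos : (0:ℝ) < ∫ x, Real.exp ((g x - c x y) / ε) ∂μ :=
      lt_of_lt_of_le (Real.exp_pos _) (exp_int_bounds μ c hcm Mc hcb ε hε g hgint.1 Mg hgb y).1
    have h1 : Real.exp (-t / ε) * ∫ x, Real.exp ((h x - c x y) / ε) ∂μ
        ≤ ∫ x, Real.exp ((g x - c x y) / ε) ∂μ := by
      rw [← integral_const_mul]
      apply integral_mono_ae ((hhexp y).const_mul _) (hgexp y)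
      filter_upwards [hgh] with x hx
      rw [← Real.exp_add]
      apply Real.exp_le_exp.2
      rw [← add_div]
      apply (div_le_div_iff_of_pos_right hε).2
      have := abs_le.1 hx; linarith
    have h2 : Real.log (Real.exp (-t / ε) * ∫ x, Real.exp ((h x - c x y) / ε) ∂μ)
        ≤ Real.log (∫ x, Real.exp ((g x - c x y) / ε) ∂μ) :=
      Real.log_le_log (by positivity) h1
    rw [Real.log_mul (Real.exp_pos _).ne' hIh_pos.ne', Real.log_exp] at h2
    have h3 := mul_le_mul_of_nonneg_left h2 hε.le
    have h4 : ε * (-t / ε) = -t := by field_simp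
    rw [mul_add, h4] at h3
    nlinarith [h3]
  -- integrate
  have part2 : ∫ y, (-ε * Real.log (∫ x, Real.exp ((g x - c x y) / ε) ∂μ)) ∂ν
      ≤ (∫ y, (-ε * Real.log (∫ x, Real.exp ((h x - c x y) / ε) ∂μ)) ∂ν) + t := by
    have hgl := log_integrable μ ν c hcm Mc hcb ε hε g hgint.1 Mg hgb
    have hhl := log_integrable μ ν c hcm Mc hcb ε hε h hhint.1 Mh hhb
    have : ∫ y, (-ε * Real.log (∫ x, Real.exp ((g x - c x y) / ε) ∂μ)) ∂ν
        ≤ ∫ y, ((-ε * Real.log (∫ x, Real.exp ((h x - c x y) / ε) ∂μ)) + t) ∂ν := by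
      apply integral_mono_ae hgl (hhl.add (integrable_const t))
      filter_upwards with y
      exact part2pt y
    rwa [integral_add hhl (integrable_const t), integral_const, probReal_univ,
      one_smul] at this
  unfold semiDualObj
  linarith

end AuxSemiDual

/-- For any uniformly bounded class `ℱ` of continuous functions,
`OT_ℱ^ε(μ,ν) ≤ OT^ε(μ,ν)`, and if `φ⋆` is an optimal semi-dual potential then for every
`f ∈ ℱ`: `|OT^ε(μ,ν) - OT_ℱ^ε(μ,ν)| ≤ 2 sup_{x∈𝒳} |φ⋆(x) - f(x)|`. -/
theorem stmt_7 {d : ℕ} (X Y : Set (EuclideanSpace ℝ (Fin d)))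
    (hX : IsCompact X) (hY : IsCompact Y) (hXne : X.Nonempty)
    (μ ν : Measure (EuclideanSpace ℝ (Fin d)))
    [IsProbabilityMeasure μ] [IsProbabilityMeasure ν]
    (hμX : μ X = 1) (hνY : ν Y = 1)
    (c : EuclideanSpace ℝ (Fin d) → EuclideanSpace ℝ (Fin d) → ℝ)
    (hcm : Measurable fun p : EuclideanSpace ℝ (Fin d) × EuclideanSpace ℝ (Fin d) => c p.1 p.2)
    (Mc : ℝ) (hcb : ∀ x y, |c x y| ≤ Mc)
    (ε : ℝ) (hε : 0 < ε)
    (F : Set (EuclideanSpace ℝ (Fin d) → ℝ)) (hFne : F.Nonempty)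
    (hFcont : ∀ f ∈ F, Continuous f)
    (B : ℝ) (hFb : ∀ f ∈ F, ∀ x, |f x| ≤ B)
    -- `φ⋆` is an optimal semi-dual potential achieving the value `OT^ε(μ,ν)`:
    (φs : EuclideanSpace ℝ (Fin d) → ℝ) (hφsint : Integrable φs μ)
    (Mφ : ℝ) (hφsb : ∀ x, |φs x| ≤ Mφ)
    (OTval : ℝ)
    (hopt : semiDualObj μ ν c ε φs = OTval)
    (hub : ∀ φ' : EuclideanSpace ℝ (Fin d) → ℝ, Integrable φ' μ →
      semiDualObj μ ν c ε φ' ≤ OTval) :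
    sSup (semiDualObj μ ν c ε '' F) ≤ OTval
    ∧ ∀ f ∈ F, |OTval - sSup (semiDualObj μ ν c ε '' F)|
        ≤ 2 * ⨆ x : X, |φs x - f x| := by

  have hμXc : ∀ᵐ x ∂μ, x ∈ X := by
    have hXm : MeasurableSet X := hX.isClosed.measurableSet
    have : μ Xᶜ = 0 := by
      rw [measure_compl hXm (measure_ne_top μ X), hμX, measure_univ, tsub_self]
    rw [ae_iff]
    exact this
  have hFint : ∀ f ∈ F, Integrable f μ := fun f hf =>
    (integrable_const B).mono' (hFcont f hf).aestronglyMeasurable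
      (Filter.Eventually.of_forall fun x => by rw [Real.norm_eq_abs]; exact hFb f hf x)
  have hbdd : BddAbove (semiDualObj μ ν c ε '' F) :=
    ⟨OTval, by rintro _ ⟨f, hf, rfl⟩; exact hub f (hFint f hf)⟩
  have hS : sSup (semiDualObj μ ν c ε '' F) ≤ OTval :=
    csSup_le (hFne.image _) (by rintro _ ⟨f, hf, rfl⟩; exact hub f (hFint f hf))
  refine ⟨hS, fun f hf => ?_⟩
  set T := ⨆ x : X, |φs x - f x| with hT
  have hbddT : BddAbove (Set.range fun x : X => |φs x - f x|) := by
    refine ⟨Mφ + B, ?_⟩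
    rintro _ ⟨x, rfl⟩
    calc |φs x.1 - f x.1| ≤ |φs x.1| + |f x.1| := abs_sub _ _
      _ ≤ Mφ + B := add_le_add (hφsb x.1) (hFb f hf x.1)
  have hTx : ∀ x ∈ X, |φs x - f x| ≤ T := fun x hx => le_ciSup hbddT ⟨x, hx⟩
  obtain ⟨x0, hx0⟩ := hXne
  have hT0 : 0 ≤ T := le_trans (abs_nonneg _) (hTx x0 hx0)
  have hae : ∀ᵐ x ∂μ, |φs x - f x| ≤ T := by
    filter_upwards [hμXc] with x hx
    exact hTx x hx
  have hkey := semiDual_comp μ ν c hcm Mc hcb ε hε φs f hφsint (hFint f hf)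
    Mφ B hφsb (hFb f hf) T hT0 hae
  have h5 : semiDualObj μ ν c ε f ≤ sSup (semiDualObj μ ν c ε '' F) :=
    le_csSup hbdd ⟨f, hf, rfl⟩
  rw [abs_of_nonneg (sub_nonneg.2 hS)]
  linarith
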